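/- Let f > 0, α > 0, h₀ > 0 be constants and set τ(t) = tan(ft/2). Define, for t not an odd multiple of π/f, the rotationally symmetric fields U(t,r) = (f r/2)·(α² − 1)·τ/(1 + α²τ²), V(t,r) = −(f r/2)·(α − 1)(ατ² − 1)/(1 + α²τ²), h(t,r) = α(1 + τ²)h₀/(1 + α²τ²). Then (U, V, h) satisfies the rotating shallow water equations in polar form: U_t + U·U_r − V²/r − f·V + g·h_r = 0, V_t + U·V_r + U·V/r + f·U = 0, h_t + (1/r)(r·U·h)_r = 0, for all r > 0. -/

import Mathlib

set_option maxHeartbeats 1000000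

/-- The time-periodic pulsation fields satisfy the rotationally symmetric
rotating shallow water equations in polar form, away from odd multiples of π/f. -/
theorem periodic_pulsation_solution
    (f g α h₀ : ℝ) (hf : 0 < f) (hg : 0 < g) (hα : 0 < α) (hh₀ : 0 < h₀)
    (τ : ℝ → ℝ) (U V h : ℝ → ℝ → ℝ)
    (hτ : τ = fun t => Real.tan (f * t / 2))
    (hU : U = fun t r => (f * r / 2) * ((α ^ 2 - 1) * τ t) / (1 + α ^ 2 * (τ t) ^ 2))
    (hV : V = fun t r => -(f * r / 2) * ((α - 1) * (α * (τ t) ^ 2 - 1)) / (1 + α ^ 2 * (τ t) ^ 2))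
    (hh : h = fun t _r => α * (1 + (τ t) ^ 2) * h₀ / (1 + α ^ 2 * (τ t) ^ 2)) :
    ∀ t : ℝ, (∀ k : ℤ, t ≠ (2 * (k : ℝ) + 1) * Real.pi / f) → ∀ r : ℝ, 0 < r →
      (deriv (fun s => U s r) t + U t r * deriv (fun s => U t s) r
        - (V t r) ^ 2 / r - f * V t r + g * deriv (fun s => h t s) r = 0) ∧
      (deriv (fun s => V s r) t + U t r * deriv (fun s => V t s) r
        + U t r * V t r / r + f * U t r = 0) ∧
      (deriv (fun s => h s r) t
        + (1 / r) * deriv (fun s => s * U t s * h t s) r = 0) := by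
  intro t ht r hr
  have hcos : Real.cos (f * t / 2) ≠ 0 := by
    intro hc
    rcases Real.cos_eq_zero_iff.1 hc with ⟨k, hk⟩
    apply ht k
    have hf' : f ≠ 0 := ne_of_gt hf
    field_simp at hk ⊢
    linarith
  have hτd : HasDerivAt τ (f / 2 * (1 + (τ t) ^ 2)) t := by
    have h1 : HasDerivAt (fun s : ℝ => f * s / 2) (f / 2) t := by
      simpa using ((hasDerivAt_id t).const_mul f).div_const 2
    have h2 := (Real.hasDerivAt_tan hcos).comp t h1
    rw [hτ]
    refine h2.congr_deriv ?_
    have hc2 : (Real.cos (f * t / 2) ^ 2)⁻¹ = 1 + Real.tan (f * t / 2) ^ 2 := by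
      rw [← Real.inv_one_add_tan_sq hcos, inv_inv]
    simp only [one_div, hc2]
    ring
  have hDne : (1 + α ^ 2 * (τ t) ^ 2) ≠ 0 := by positivity
  have hrne : r ≠ 0 := ne_of_gt hr
  set x : ℝ := τ t with hx
  set x' : ℝ := f / 2 * (1 + x ^ 2) with hx'
  -- time derivative of U
  have hUt : deriv (fun s => U s r) t
      = ((f * r / 2) * ((α ^ 2 - 1) * x') * (1 + α ^ 2 * x ^ 2)
          - (f * r / 2) * ((α ^ 2 - 1) * x) * (α ^ 2 * (2 * x * x'))) / (1 + α ^ 2 * x ^ 2) ^ 2 := by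
    have hnum : HasDerivAt (fun s => (f * r / 2) * ((α ^ 2 - 1) * τ s))
        ((f * r / 2) * ((α ^ 2 - 1) * x')) t := (hτd.const_mul _).const_mul _
    have hden : HasDerivAt (fun s => 1 + α ^ 2 * (τ s) ^ 2)
        (α ^ 2 * (2 * x * x')) t := by
      have := ((hτd.fun_pow 2).const_mul (α ^ 2)).const_add 1
      refine this.congr_deriv ?_; push_cast; ring
    have := (hnum.div hden hDne).deriv
    rw [hU]; exact this
  -- time derivative of V
  have hVt : deriv (fun s => V s r) t
      = (-(f * r / 2) * ((α - 1) * (α * (2 * x * x'))) * (1 + α ^ 2 * x ^ 2)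
          - -(f * r / 2) * ((α - 1) * (α * x ^ 2 - 1)) * (α ^ 2 * (2 * x * x'))) / (1 + α ^ 2 * x ^ 2) ^ 2 := by
    have hnum : HasDerivAt (fun s => -(f * r / 2) * ((α - 1) * (α * (τ s) ^ 2 - 1)))
        (-(f * r / 2) * ((α - 1) * (α * (2 * x * x')))) t := by
      have := ((((hτd.fun_pow 2).const_mul α).sub_const 1).const_mul (α - 1)).const_mul (-(f * r / 2))
      refine this.congr_deriv ?_; push_cast; ring
    have hden : HasDerivAt (fun s => 1 + α ^ 2 * (τ s) ^ 2)
        (α ^ 2 * (2 * x * x')) t := by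
      have := ((hτd.fun_pow 2).const_mul (α ^ 2)).const_add 1
      refine this.congr_deriv ?_; push_cast; ring
    have := (hnum.div hden hDne).deriv
    rw [hV]; exact this
  -- time derivative of h
  have hht : deriv (fun s => h s r) t
      = (α * (2 * x * x') * h₀ * (1 + α ^ 2 * x ^ 2)
          - α * (1 + x ^ 2) * h₀ * (α ^ 2 * (2 * x * x'))) / (1 + α ^ 2 * x ^ 2) ^ 2 := by
    have hnum : HasDerivAt (fun s => α * (1 + (τ s) ^ 2) * h₀)
        (α * (2 * x * x') * h₀) t := by
      have := (((hτd.fun_pow 2).const_add 1).const_mul α).mul_const h₀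
      refine this.congr_deriv ?_; push_cast; ring
    have hden : HasDerivAt (fun s => 1 + α ^ 2 * (τ s) ^ 2)
        (α ^ 2 * (2 * x * x')) t := by
      have := ((hτd.fun_pow 2).const_mul (α ^ 2)).const_add 1
      refine this.congr_deriv ?_; push_cast; ring
    have := (hnum.div hden hDne).deriv
    rw [hh]; exact this
  -- spatial derivative of U
  have hUr : deriv (fun s => U t s) r = (f / 2) * ((α ^ 2 - 1) * x) / (1 + α ^ 2 * x ^ 2) := by
    have heq : (fun s => U t s) = fun s => ((f / 2) * ((α ^ 2 - 1) * x) / (1 + α ^ 2 * x ^ 2)) * s := by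
      funext s; rw [hU]; field_simp; ring
    rw [heq, deriv_const_mul _ differentiableAt_fun_id, deriv_id'', mul_one]
  -- spatial derivative of V
  have hVr : deriv (fun s => V t s) r
      = -(f / 2) * ((α - 1) * (α * x ^ 2 - 1)) / (1 + α ^ 2 * x ^ 2) := by
    have heq : (fun s => V t s)
        = fun s => (-(f / 2) * ((α - 1) * (α * x ^ 2 - 1)) / (1 + α ^ 2 * x ^ 2)) * s := by
      funext s; rw [hV]; field_simp; ring
    rw [heq, deriv_const_mul _ differentiableAt_fun_id, deriv_id'', mul_one]
  -- spatial derivative of h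
  have hhr : deriv (fun s => h t s) r = 0 := by
    rw [hh]; exact deriv_const _ _
  -- spatial derivative of r*U*h
  have hrUh : deriv (fun s => s * U t s * h t s) r
      = ((f / 2) * ((α ^ 2 - 1) * x) / (1 + α ^ 2 * x ^ 2)
          * (α * (1 + x ^ 2) * h₀ / (1 + α ^ 2 * x ^ 2))) * (2 * r) := by
    have heq : (fun s => s * U t s * h t s)
        = fun s => ((f / 2) * ((α ^ 2 - 1) * x) / (1 + α ^ 2 * x ^ 2)
            * (α * (1 + x ^ 2) * h₀ / (1 + α ^ 2 * x ^ 2))) * s ^ 2 := by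
      funext s; rw [hU, hh]; field_simp; ring
    rw [heq]
    have := ((hasDerivAt_pow 2 r).const_mul
      ((f / 2) * ((α ^ 2 - 1) * x) / (1 + α ^ 2 * x ^ 2)
        * (α * (1 + x ^ 2) * h₀ / (1 + α ^ 2 * x ^ 2)))).deriv
    rw [this]; push_cast; ring
  have hUv : U t r = (f * r / 2) * ((α ^ 2 - 1) * x) / (1 + α ^ 2 * x ^ 2) := by rw [hU]
  have hVv : V t r = -(f * r / 2) * ((α - 1) * (α * x ^ 2 - 1)) / (1 + α ^ 2 * x ^ 2) := by rw [hV]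
  rw [hUt, hVt, hht, hUr, hVr, hhr, hrUh, hUv, hVv, hx']
  refine ⟨?_, ?_, ?_⟩ <;> field_simp <;> ring
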